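/- Hadamard interpolation for Kolmogorov domains: let 0 < s−σ₀ and s+σ₁ ≤ 1 with σ₁ = −log(1 − σ₀/s). Then for every f continuous on T^n_{s+σ₁} := 𝕋ⁿ_{s+σ₁} × 𝔻ⁿ_{s+σ₁} and holomorphic in its interior, |f|_s² ≤ |f|_{s−σ₀} · |f|_{s+σ₁}, where |f|_s denotes the sup norm on T^n_s. -/

import Mathlib

set_option maxHeartbeats 1000000

open Complex Set

/-- Shift a single coordinate by an integer multiple of `2π`. -/
lemma kshift1 {n : ℕ} (f : (Fin n → ℂ) × (Fin n → ℂ) → ℂ)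
    (hper : ∀ (p : (Fin n → ℂ) × (Fin n → ℂ)) (j : Fin n),
      f (Function.update p.1 j (p.1 j + 2 * Real.pi), p.2) = f p)
    (p : (Fin n → ℂ) × (Fin n → ℂ)) (j : Fin n) (k : ℤ) :
    f (Function.update p.1 j (p.1 j + 2 * Real.pi * (k : ℂ)), p.2) = f p := by
  induction k using Int.induction_on with
  | zero => simp
  | succ k ih =>
      have h := hper (Function.update p.1 j (p.1 j + 2 * Real.pi * ((k : ℕ) : ℂ)), p.2) j
      simp only [Function.update_self, Function.update_idem] at h
      push_cast at h ih ⊢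
      rw [show p.1 j + 2 * (Real.pi : ℂ) * ((k : ℂ) + 1) =
        p.1 j + 2 * (Real.pi : ℂ) * (k : ℂ) + 2 * (Real.pi : ℂ) by ring, h, ih]
  | pred k ih =>
      have h := hper (Function.update p.1 j (p.1 j + 2 * Real.pi * (((-(k:ℤ) - 1 : ℤ)) : ℂ)), p.2) j
      simp only [Function.update_self, Function.update_idem] at h
      push_cast at h ih ⊢
      rw [show p.1 j + 2 * (Real.pi : ℂ) * (-(k : ℂ) - 1) + 2 * (Real.pi : ℂ) =
        p.1 j + 2 * (Real.pi : ℂ) * (-(k : ℂ)) by ring] at h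
      rw [← h]
      exact ih

/-- Shift all coordinates by integer multiples of `2π`. -/
lemma kshiftAll {n : ℕ} (f : (Fin n → ℂ) × (Fin n → ℂ) → ℂ)
    (hper : ∀ (p : (Fin n → ℂ) × (Fin n → ℂ)) (j : Fin n),
      f (Function.update p.1 j (p.1 j + 2 * Real.pi), p.2) = f p)
    (p : (Fin n → ℂ) × (Fin n → ℂ)) (k : Fin n → ℤ) :
    f (fun j => p.1 j + 2 * Real.pi * (k j : ℂ), p.2) = f p := by
  have key : ∀ S : Finset (Fin n),
      f (fun j => p.1 j + (if j ∈ S then 2 * Real.pi * (k j : ℂ) else 0), p.2) = f p := by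
    intro S
    induction S using Finset.induction_on with
    | empty => simp
    | @insert a S ha ih =>
        have heq : (fun j => p.1 j + (if j ∈ insert a S then 2 * Real.pi * (k j : ℂ) else 0)) =
            Function.update (fun j => p.1 j + (if j ∈ S then 2 * Real.pi * (k j : ℂ) else 0)) a
              ((p.1 a + (if a ∈ S then 2 * Real.pi * (k a : ℂ) else 0)) + 2 * Real.pi * (k a : ℂ)) := by
          funext j
          rcases eq_or_ne j a with rfl | hj
          · simp [ha]
          · simp [Function.update_of_ne hj, hj]
        rw [heq]
        have := kshift1 f hper (fun j => p.1 j + (if j ∈ S then 2 * Real.pi * (k j : ℂ) else 0), p.2) a (k a)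
        simp only at this
        rw [this, ih]
  have := key Finset.univ
  simpa using this

/-- `f` is bounded on `kdom n r`. -/
lemma kbdd {n : ℕ} (r : ℝ) (hr : 0 ≤ r) (f : (Fin n → ℂ) × (Fin n → ℂ) → ℂ)
    (hf₁ : ContinuousOn f {p : (Fin n → ℂ) × (Fin n → ℂ) |
      (∀ j, |(p.1 j).im| ≤ r) ∧ (∀ j, ‖p.2 j‖ ≤ r)})
    (hper : ∀ (p : (Fin n → ℂ) × (Fin n → ℂ)) (j : Fin n),
      f (Function.update p.1 j (p.1 j + 2 * Real.pi), p.2) = f p) :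
    ∃ C, 0 ≤ C ∧ ∀ p : (Fin n → ℂ) × (Fin n → ℂ),
      (∀ j, |(p.1 j).im| ≤ r) → (∀ j, ‖p.2 j‖ ≤ r) → ‖f p‖ ≤ C := by
  classical
  set D : Set ((Fin n → ℂ) × (Fin n → ℂ)) :=
    {p | (∀ j, |(p.1 j).im| ≤ r) ∧ (∀ j, ‖p.2 j‖ ≤ r)} with hD
  set K : Set ((Fin n → ℂ) × (Fin n → ℂ)) :=
    {p | (∀ j, |(p.1 j).im| ≤ r) ∧ (∀ j, ‖p.2 j‖ ≤ r) ∧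
      (∀ j, (p.1 j).re ∈ Icc (0:ℝ) (2 * Real.pi))} with hK
  have hKD : K ⊆ D := fun p hp => ⟨hp.1, hp.2.1⟩
  have hKc : IsClosed K := by
    have : K = (⋂ j, {p : (Fin n → ℂ) × (Fin n → ℂ) | |(p.1 j).im| ≤ r}) ∩
        ((⋂ j, {p : (Fin n → ℂ) × (Fin n → ℂ) | ‖p.2 j‖ ≤ r}) ∩
         (⋂ j, {p : (Fin n → ℂ) × (Fin n → ℂ) | (p.1 j).re ∈ Icc (0:ℝ) (2 * Real.pi)})) := by
      ext p; simp [hK, forall_and]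
    rw [this]
    have c1 : ∀ j : Fin n, Continuous fun p : (Fin n → ℂ) × (Fin n → ℂ) => p.1 j := by
      intro j; exact (continuous_apply j).comp continuous_fst
    have c2 : ∀ j : Fin n, Continuous fun p : (Fin n → ℂ) × (Fin n → ℂ) => p.2 j := by
      intro j; exact (continuous_apply j).comp continuous_snd
    refine IsClosed.inter (isClosed_iInter fun j => ?_)
      (IsClosed.inter (isClosed_iInter fun j => ?_) (isClosed_iInter fun j => ?_))
    · exact isClosed_le (continuous_abs.comp (Complex.continuous_im.comp (c1 j))) continuous_const
    · exact isClosed_le ((c2 j).norm) continuous_const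
    · exact IsClosed.preimage (Complex.continuous_re.comp (c1 j)) isClosed_Icc
  have hKb : Bornology.IsBounded K := by
    rw [Metric.isBounded_iff_subset_closedBall 0]
    refine ⟨2 * Real.pi + r, fun p hp => ?_⟩
    have hR : (0:ℝ) ≤ 2 * Real.pi + r := by positivity
    simp only [Metric.mem_closedBall, dist_zero_right]
    rw [Prod.norm_def]
    apply max_le
    · rw [pi_norm_le_iff_of_nonneg hR]
      intro j
      calc ‖p.1 j‖ ≤ |(p.1 j).re| + |(p.1 j).im| := Complex.norm_le_abs_re_add_abs_im _
        _ ≤ 2 * Real.pi + r := by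
            have h1 := hp.2.2 j
            have h2 := hp.1 j
            have := Real.pi_pos
            rw [_root_.abs_of_nonneg h1.1]
            exact add_le_add h1.2 h2
    · rw [pi_norm_le_iff_of_nonneg hR]
      intro j
      have := hp.2.1 j
      have := Real.pi_pos
      linarith
  have hKcomp : IsCompact K := Metric.isCompact_of_isClosed_isBounded hKc hKb
  obtain ⟨C, hC⟩ := hKcomp.exists_bound_of_continuousOn (hf₁.mono hKD)
  have h0K : (fun _ => (0:ℂ), fun _ => (0:ℂ)) ∈ K := by
    refine ⟨fun j => by simp [hr], fun j => by simp [hr], fun j => ?_⟩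
    simp; positivity
  have hC0 : 0 ≤ C := le_trans (norm_nonneg _) (hC _ h0K)
  refine ⟨C, hC0, fun p hp1 hp2 => ?_⟩
  set k : Fin n → ℤ := fun j => -⌊(p.1 j).re / (2 * Real.pi)⌋ with hk
  set q : (Fin n → ℂ) × (Fin n → ℂ) := (fun j => p.1 j + 2 * Real.pi * (k j : ℂ), p.2) with hq
  have hfq : f q = f p := kshiftAll f hper p k
  have hqK : q ∈ K := by
    have hpi := Real.pi_pos
    refine ⟨fun j => ?_, hp2, fun j => ?_⟩
    · have : (q.1 j).im = (p.1 j).im := by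
        simp [hq]
      rw [this]; exact hp1 j
    · have hre : (q.1 j).re = (p.1 j).re + 2 * Real.pi * (k j : ℝ) := by
        simp [hq]
      rw [hre, hk]
      have hfr1 := Int.fract_nonneg ((p.1 j).re / (2 * Real.pi))
      have hfr2 := Int.fract_lt_one ((p.1 j).re / (2 * Real.pi))
      rw [Int.fract] at hfr1 hfr2
      have h2pi : (0:ℝ) < 2 * Real.pi := by positivity
      have ht : 2 * Real.pi * ((p.1 j).re / (2 * Real.pi)) = (p.1 j).re := by field_simp
      constructor
      · push_cast
        linarith [mul_nonneg h2pi.le hfr1, ht]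
      · push_cast
        linarith [mul_lt_mul_of_pos_left hfr2 h2pi, ht]
  calc ‖f p‖ = ‖f q‖ := by rw [hfq]
    _ ≤ C := hC q hqK

open Complex.HadamardThreeLines


/-- The closed Kolmogorov domain `T^n_r = 𝕋ⁿ_r × 𝔻ⁿ_r`, lifted to `ℂⁿ × ℂⁿ`. -/
def kdom (n : ℕ) (r : ℝ) : Set ((Fin n → ℂ) × (Fin n → ℂ)) :=
  {p | (∀ j, |(p.1 j).im| ≤ r) ∧ (∀ j, ‖p.2 j‖ ≤ r)}

/-- The open Kolmogorov domain (interior of `kdom n r`). -/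
def okdom (n : ℕ) (r : ℝ) : Set ((Fin n → ℂ) × (Fin n → ℂ)) :=
  {p | (∀ j, |(p.1 j).im| < r) ∧ (∀ j, ‖p.2 j‖ < r)}

/-- The sup norm `|f|_r` over `T^n_r`. -/
noncomputable def knrm (n : ℕ) (f : (Fin n → ℂ) × (Fin n → ℂ) → ℂ) (r : ℝ) : ℝ :=
  sSup ((fun p => ‖f p‖) '' kdom n r)

/-- Hadamard interpolation for Kolmogorov domains: if `σ₁ = -log(1 - σ₀/s)`,
`0 < s - σ₀`, `s + σ₁ ≤ 1`, then `|f|_s² ≤ |f|_{s-σ₀}·|f|_{s+σ₁}` for every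
`f ∈ 𝒜(T^n_{s+σ₁})`. -/
theorem stmt_13 (n : ℕ) (s σ₀ σ₁ : ℝ)
    (hσ₀ : 0 < σ₀) (hσ₀s : σ₀ < s) (hs1 : s + σ₁ ≤ 1)
    (hσ₁ : σ₁ = -Real.log (1 - σ₀ / s))
    (f : (Fin n → ℂ) × (Fin n → ℂ) → ℂ)
    (hf₁ : ContinuousOn f (kdom n (s + σ₁)))
    (hf₂ : DifferentiableOn ℂ f (okdom n (s + σ₁)))
    (hper : ∀ (p : (Fin n → ℂ) × (Fin n → ℂ)) (j : Fin n),
      f (Function.update p.1 j (p.1 j + 2 * Real.pi), p.2) = f p) :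
    (knrm n f s) ^ 2 ≤ knrm n f (s - σ₀) * knrm n f (s + σ₁) := by
  classical
  have hs : 0 < s := lt_trans hσ₀ hσ₀s
  have hss : 0 < s - σ₀ := by linarith
  have hx : 0 < 1 - σ₀ / s := by
    have : σ₀ / s < 1 := (div_lt_one hs).mpr hσ₀s
    linarith
  have hx1 : 1 - σ₀ / s < 1 := by
    have : 0 < σ₀ / s := div_pos hσ₀ hs
    linarith
  have hσ₁pos : 0 < σ₁ := by
    rw [hσ₁]; exact neg_pos.mpr (Real.log_neg hx hx1)
  have hsle : s ≤ 1 - σ₁ := by linarith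
  have hexp : Real.exp σ₁ = s / (s - σ₀) := by
    rw [hσ₁, Real.exp_neg, Real.exp_log hx,
      show 1 - σ₀ / s = (s - σ₀) / s by field_simp, inv_div]
  have hexpneg : Real.exp (-σ₁) = (s - σ₀) / s := by
    rw [Real.exp_neg, hexp, inv_div]
  have hσ₀₁ : σ₀ ≤ σ₁ := by
    have hlog := Real.log_le_sub_one_of_pos hx
    have h2 : σ₀ / s ≤ σ₁ := by rw [hσ₁]; linarith
    have h3 : σ₀ ≤ σ₀ / s := by rw [le_div_iff₀ hs]; nlinarith
    linarith
  have hkey : s * Real.exp σ₁ ≤ s + σ₁ := by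
    have h1 := Real.add_one_le_exp (-σ₁)
    have h2 : Real.exp (-σ₁) * Real.exp σ₁ = 1 := by rw [← Real.exp_add]; simp
    have h3 : 1 ≤ Real.exp σ₁ := Real.one_le_exp hσ₁pos.le
    nlinarith [Real.exp_pos σ₁]
  obtain ⟨C, hC0, hC⟩ := kbdd (s + σ₁) (by linarith) f hf₁ hper
  have hbdd : ∀ r, r ≤ s + σ₁ → BddAbove ((fun p => ‖f p‖) '' kdom n r) := by
    intro r hrle
    refine ⟨C, ?_⟩
    rintro x ⟨p, hp, rfl⟩
    exact hC p (fun j => le_trans (hp.1 j) hrle) (fun j => le_trans (hp.2 j) hrle)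
  have hmem0 : ∀ r : ℝ, 0 ≤ r → ((fun _ => (0:ℂ), fun _ => (0:ℂ)) :
      (Fin n → ℂ) × (Fin n → ℂ)) ∈ kdom n r :=
    fun r hr => ⟨fun j => by simp [hr], fun j => by simp [hr]⟩
  have hne : ∀ r : ℝ, 0 ≤ r → ((fun p => ‖f p‖) '' kdom n r).Nonempty :=
    fun r hr => ⟨_, Set.mem_image_of_mem _ (hmem0 r hr)⟩
  have hnonneg : ∀ r : ℝ, 0 ≤ r → r ≤ s + σ₁ → 0 ≤ knrm n f r := by
    intro r h1 h2
    exact le_trans (norm_nonneg _) (le_csSup (hbdd r h2) (Set.mem_image_of_mem _ (hmem0 r h1)))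
  set A := knrm n f (s - σ₀) with hAdef
  set B := knrm n f (s + σ₁) with hBdef
  have hA0 : 0 ≤ A := hnonneg _ (by linarith) (by linarith)
  have hB0 : 0 ≤ B := hnonneg _ (by linarith) le_rfl
  have main : knrm n f s ≤ A ^ ((1:ℝ)/2) * B ^ ((1:ℝ)/2) := by
    apply csSup_le (hne s hs.le)
    rintro x ⟨p, hp, rfl⟩
    set c : ℝ := 1 - σ₀ / s with hcdef
    set d : ℝ := 2 * σ₀ / s with hddef
    have hc : 0 < c := hx
    have hd : 0 < d := by rw [hddef]; positivity
    have hcd : c + d / 2 = 1 := by rw [hcdef, hddef]; field_simp; ring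
    have hsc : s * c = s - σ₀ := by rw [hcdef]; field_simp
    have hsd : s * d = 2 * σ₀ := by rw [hddef]; field_simp
    set W : ℂ → (Fin n → ℂ) × (Fin n → ℂ) := fun w =>
      (fun j => p.1 j + Complex.I * ((p.1 j).im : ℂ) * ((c : ℂ) + (d : ℂ) * w - 1),
       fun j => p.2 j * Complex.exp (((2 * σ₁ : ℝ) : ℂ) * (w - 1/2))) with hWdefn
    have him : ∀ (w : ℂ) (j : Fin n), ((W w).1 j).im = (p.1 j).im * (c + d * w.re) := by
      intro w j
      simp only [hWdefn, Complex.add_im, Complex.mul_im, Complex.mul_re, Complex.I_re,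
        Complex.I_im, Complex.ofReal_re, Complex.ofReal_im, Complex.sub_re, Complex.sub_im,
        Complex.add_re, Complex.one_re, Complex.one_im]
      ring
    have hnrm2 : ∀ (w : ℂ) (j : Fin n),
        ‖(W w).2 j‖ = ‖p.2 j‖ * Real.exp (2 * σ₁ * (w.re - 1/2)) := by
      intro w j
      simp only [hWdefn, norm_mul, Complex.norm_exp]
      congr 2
      simp [Complex.mul_re, Complex.sub_re, Complex.ofReal_re, Complex.ofReal_im]
    have hW12 : W ((1/2 : ℝ) : ℂ) = p := by
      have h0 : (c : ℂ) + (d : ℂ) * ((1/2 : ℝ) : ℂ) - 1 = 0 := by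
        have hre : c + d * (1/2 : ℝ) - 1 = 0 := by linarith
        calc (c : ℂ) + (d : ℂ) * ((1/2 : ℝ) : ℂ) - 1
            = ((c + d * (1/2 : ℝ) - 1 : ℝ) : ℂ) := by push_cast; ring
          _ = 0 := by rw [hre]; simp
      refine Prod.ext ?_ ?_ <;> funext j
      · show p.1 j + Complex.I * ((p.1 j).im : ℂ) * ((c : ℂ) + (d : ℂ) * ((1/2 : ℝ) : ℂ) - 1) = p.1 j
        rw [h0, mul_zero, add_zero]
      · show p.2 j * Complex.exp (((2 * σ₁ : ℝ) : ℂ) * (((1/2 : ℝ) : ℂ) - 1/2)) = p.2 j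
        rw [show (((1/2 : ℝ) : ℂ) - 1/2) = 0 by push_cast; ring, mul_zero, Complex.exp_zero,
          mul_one]
    have hmapsC : ∀ w : ℂ, w.re ∈ Set.Icc (0:ℝ) 1 → W w ∈ kdom n (s + σ₁) := by
      intro w hw
      refine ⟨fun j => ?_, fun j => ?_⟩
      · rw [him]
        have hy : |(p.1 j).im| ≤ s := hp.1 j
        have h1 : 0 ≤ c + d * w.re := by nlinarith [hw.1]
        rw [abs_mul, _root_.abs_of_nonneg h1]
        have h5 : s * (c + d * w.re) = s - σ₀ + 2 * σ₀ * w.re := by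
          rw [mul_add, hsc, mul_comm d w.re, ← mul_assoc, mul_comm s w.re, mul_assoc, hsd]; ring
        have h6 : 2 * σ₀ * w.re ≤ 2 * σ₀ := by nlinarith [hw.2]
        nlinarith [mul_le_mul_of_nonneg_right hy h1]
      · rw [hnrm2]
        have hz : ‖p.2 j‖ ≤ s := hp.2 j
        have h1 : Real.exp (2 * σ₁ * (w.re - 1/2)) ≤ Real.exp σ₁ := by
          apply Real.exp_le_exp.mpr; nlinarith [hw.2, hσ₁pos]
        calc ‖p.2 j‖ * Real.exp (2 * σ₁ * (w.re - 1/2)) ≤ s * Real.exp σ₁ :=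
              mul_le_mul hz h1 (Real.exp_pos _).le hs.le
          _ ≤ s + σ₁ := hkey
    have hmapsO : ∀ w : ℂ, w.re ∈ Set.Ioo (0:ℝ) 1 → W w ∈ okdom n (s + σ₁) := by
      intro w hw
      refine ⟨fun j => ?_, fun j => ?_⟩
      · rw [him]
        have hy : |(p.1 j).im| ≤ s := hp.1 j
        have h1 : 0 ≤ c + d * w.re := by nlinarith [hw.1.le]
        rw [abs_mul, _root_.abs_of_nonneg h1]
        have h5 : s * (c + d * w.re) = s - σ₀ + 2 * σ₀ * w.re := by
          rw [mul_add, hsc, mul_comm d w.re, ← mul_assoc, mul_comm s w.re, mul_assoc, hsd]; ring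
        have h6 : 2 * σ₀ * w.re < 2 * σ₀ := by nlinarith [hw.2]
        nlinarith [mul_le_mul_of_nonneg_right hy h1]
      · rw [hnrm2]
        have hz : ‖p.2 j‖ ≤ s := hp.2 j
        have h1 : Real.exp (2 * σ₁ * (w.re - 1/2)) < Real.exp σ₁ := by
          apply Real.exp_lt_exp.mpr; nlinarith [hw.2, hσ₁pos]
        calc ‖p.2 j‖ * Real.exp (2 * σ₁ * (w.re - 1/2)) < s * Real.exp σ₁ := by
              apply mul_lt_mul' hz h1 (Real.exp_pos _).le hs
          _ ≤ s + σ₁ := hkey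
    have hmaps0 : ∀ w : ℂ, w.re = 0 → W w ∈ kdom n (s - σ₀) := by
      intro w hw
      refine ⟨fun j => ?_, fun j => ?_⟩
      · rw [him, hw]
        have hy : |(p.1 j).im| ≤ s := hp.1 j
        rw [mul_zero, add_zero, abs_mul, _root_.abs_of_nonneg hc.le]
        nlinarith [mul_le_mul_of_nonneg_right hy hc.le]
      · rw [hnrm2, hw]
        have hz : ‖p.2 j‖ ≤ s := hp.2 j
        have he : Real.exp (2 * σ₁ * ((0:ℝ) - 1/2)) = (s - σ₀) / s := by
          rw [show 2 * σ₁ * ((0:ℝ) - 1/2) = -σ₁ by ring, hexpneg]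
        rw [he]
        calc ‖p.2 j‖ * ((s - σ₀)/s) ≤ s * ((s - σ₀)/s) := by
              apply mul_le_mul_of_nonneg_right hz; positivity
          _ = s - σ₀ := by field_simp
    have hWdiff : Differentiable ℂ W := by
      refine Differentiable.prodMk ?_ ?_
      · rw [differentiable_pi]
        intro j
        fun_prop
      · rw [differentiable_pi]
        intro j
        fun_prop
    have hd2 : DiffContOnCl ℂ (f ∘ W) (verticalStrip 0 1) := by
      constructor
      · exact hf₂.comp hWdiff.differentiableOn (fun w hw => hmapsO w hw)
      · have hcl : closure (verticalStrip 0 1) = verticalClosedStrip 0 1 := by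
          rw [verticalStrip, Complex.closure_preimage_re, closure_Ioo (zero_ne_one)]
          rfl
        rw [hcl]
        exact hf₁.comp hWdiff.continuous.continuousOn (fun w hw => hmapsC w hw)
    have hBg : BddAbove ((norm ∘ (f ∘ W)) '' verticalClosedStrip 0 1) := by
      refine ⟨C, ?_⟩
      rintro x ⟨w, hw, rfl⟩
      exact hC _ (fun j => (hmapsC w hw).1 j) (fun j => (hmapsC w hw).2 j)
    have ha : ∀ z ∈ Complex.re ⁻¹' {0}, ‖(f ∘ W) z‖ ≤ A := by
      intro z hz
      exact le_csSup (hbdd _ (by linarith)) (Set.mem_image_of_mem _ (hmaps0 z hz))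
    have hb : ∀ z ∈ Complex.re ⁻¹' {1}, ‖(f ∘ W) z‖ ≤ B := by
      intro z hz
      refine le_csSup (hbdd _ le_rfl) (Set.mem_image_of_mem _ (hmapsC z ?_))
      rw [Set.mem_preimage, Set.mem_singleton_iff] at hz
      rw [hz]; exact ⟨zero_le_one, le_refl 1⟩
    have hhalf : (((1/2 : ℝ) : ℂ)) ∈ verticalClosedStrip 0 1 := by
      simp only [verticalClosedStrip, Set.mem_preimage, Complex.ofReal_re, Set.mem_Icc]
      norm_num
    have hHad := norm_le_interp_of_mem_verticalClosedStrip₀₁' (f ∘ W) hhalf hd2 hBg ha hb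
    simp only [Complex.ofReal_re, Function.comp_apply, hW12] at hHad
    calc ‖f p‖ ≤ A ^ (1 - (1/2 : ℝ)) * B ^ (1/2 : ℝ) := hHad
      _ = A ^ ((1:ℝ)/2) * B ^ ((1:ℝ)/2) := by norm_num
  have hks : 0 ≤ knrm n f s := hnonneg s hs.le (by linarith)
  calc (knrm n f s) ^ 2 ≤ (A ^ ((1:ℝ)/2) * B ^ ((1:ℝ)/2)) ^ 2 :=
        pow_le_pow_left₀ hks main 2
    _ = A * B := by
        rw [mul_pow, ← Real.rpow_natCast (A ^ ((1:ℝ)/2)) 2,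
          ← Real.rpow_natCast (B ^ ((1:ℝ)/2)) 2,
          ← Real.rpow_mul hA0, ← Real.rpow_mul hB0]
        norm_num
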